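/- If G is an (n,k)-graph with k ≥ 1 and uv is an edge of G, then G - {u, v} is an (n, k-1)-graph. -/

import Mathlib

/-- A graph `G` is `k`-extendable if it has a perfect matching and every matching
consisting of `k` pairwise disjoint edges extends to a perfect matching. -/
def SimpleGraph.IsKExtendable {V : Type*} [Fintype V] (G : SimpleGraph V) (k : ℕ) : Prop :=
  (∃ M : G.Subgraph, M.IsPerfectMatching) ∧
  ∀ M : G.Subgraph, M.IsMatching → M.edgeSet.ncard = k →
    ∃ P : G.Subgraph, P.IsPerfectMatching ∧ M ≤ P

/-- A graph `G` is an `(n,k)`-graph if `|G| ≥ n + 2k + 2`, `|G| ≡ n (mod 2)`, and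
deleting any `n` vertices leaves a `k`-extendable graph. -/
def SimpleGraph.IsNKGraph {V : Type*} [Fintype V] [DecidableEq V]
    (G : SimpleGraph V) (n k : ℕ) : Prop :=
  n + 2 * k + 2 ≤ Fintype.card V ∧ Fintype.card V % 2 = n % 2 ∧
  ∀ S : Finset V, S.card = n →
    SimpleGraph.IsKExtendable (G.induce ((Sᶜ : Finset V) : Set V)) k

namespace SimpleGraph

open Subgraph

variable {V : Type*} {W : Type*}

/-- Edge set of a mapped subgraph. -/
lemma edgeSet_map' {G : SimpleGraph V} {G' : SimpleGraph W} (f : G →g G') (M : G.Subgraph) :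
    (M.map f).edgeSet = Sym2.map f '' M.edgeSet := by
  ext e
  refine Sym2.ind (fun a b => ?_) e
  simp only [Subgraph.mem_edgeSet, Subgraph.map_adj, Relation.Map, Set.mem_image]
  constructor
  · rintro ⟨x, y, hxy, rfl, rfl⟩
    exact ⟨s(x, y), hxy, rfl⟩
  · rintro ⟨e', he', hmap⟩
    induction e' using Sym2.ind with
    | _ x y =>
      rw [Sym2.map_pair_eq, Sym2.eq_iff] at hmap
      rcases hmap with ⟨rfl, rfl⟩ | ⟨rfl, rfl⟩
      · exact ⟨x, y, he', rfl, rfl⟩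
      · exact ⟨y, x, M.adj_symm he', rfl, rfl⟩

/-- A matching covers at most twice as many vertices as it has edges. -/
lemma Subgraph.IsMatching.verts_ncard_le {V : Type*} [Fintype V] {G : SimpleGraph V}
    {M : G.Subgraph} (hM : M.IsMatching) : M.verts.ncard ≤ 2 * M.edgeSet.ncard := by
  classical
  have hsub : M.verts.toFinset ⊆ M.edgeSet.toFinset.biUnion
      (fun e => Finset.univ.filter (· ∈ e)) := by
    intro x hx
    rw [Set.mem_toFinset] at hx
    obtain ⟨y, hy, -⟩ := hM hx
    refine Finset.mem_biUnion.mpr ⟨s(x, y), ?_, ?_⟩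
    · rw [Set.mem_toFinset]; exact hy
    · simp
  calc M.verts.ncard = M.verts.toFinset.card := Set.ncard_eq_toFinset_card' _
    _ ≤ (M.edgeSet.toFinset.biUnion (fun e => Finset.univ.filter (· ∈ e))).card :=
        Finset.card_le_card hsub
    _ ≤ ∑ e ∈ M.edgeSet.toFinset, (Finset.univ.filter (· ∈ e)).card := Finset.card_biUnion_le
    _ ≤ ∑ _e ∈ M.edgeSet.toFinset, 2 := by
        refine Finset.sum_le_sum (fun e _ => ?_)
        induction e using Sym2.ind with
        | _ a b =>
          have hss : Finset.univ.filter (· ∈ s(a, b)) ⊆ {a, b} := by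
            intro x hx
            simp only [Finset.mem_filter, Sym2.mem_iff] at hx
            simp only [Finset.mem_insert, Finset.mem_singleton]
            exact hx.2
          refine (Finset.card_le_card hss).trans ?_
          refine (Finset.card_insert_le a {b}).trans ?_
          simp
    _ = 2 * M.edgeSet.ncard := by
        rw [Finset.sum_const, smul_eq_mul, Set.ncard_eq_toFinset_card']
        ring

/-- From a perfect matching one can extract a matching with exactly `m` edges
avoiding two given vertices, provided the graph is large enough. -/
lemma exists_matching_avoiding {V : Type*} [Fintype V] [DecidableEq V] {G : SimpleGraph V}
    {P : G.Subgraph} (hP : P.IsPerfectMatching) (u v : V) (m : ℕ)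
    (hm : 2 * m + 4 ≤ Fintype.card V) :
    ∃ N : G.Subgraph, N.IsMatching ∧ N.edgeSet.ncard = m ∧
      u ∉ N.support ∧ v ∉ N.support := by
  classical
  have hverts : P.verts = Set.univ := hP.2.verts_eq_univ
  have hPedge : Fintype.card V ≤ 2 * P.edgeSet.ncard := by
    have h1 := hP.1.verts_ncard_le
    rwa [hverts, Set.ncard_univ, Nat.card_eq_fintype_card] at h1
  obtain ⟨pu, hpuadj, hpuuniq⟩ := hP.1 (hP.2 u)
  obtain ⟨pv, hpvadj, hpvuniq⟩ := hP.1 (hP.2 v)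
  set F : Set (Sym2 V) := {e ∈ P.edgeSet | u ∉ e ∧ v ∉ e} with hF
  have hcover : P.edgeSet ⊆ F ∪ {s(u, pu), s(v, pv)} := by
    intro e he
    induction e using Sym2.ind with
    | _ a b =>
      have hab : P.Adj a b := he
      by_cases hue : u ∈ s(a, b) ∨ v ∈ s(a, b)
      · have key : s(a, b) = s(u, pu) ∨ s(a, b) = s(v, pv) := by
          rcases hue with hue | hue
          · left
            rw [Sym2.mem_iff] at hue
            rcases hue with rfl | rfl
            · rw [hpuuniq b hab]
            · rw [hpuuniq a hab.symm, Sym2.eq_swap]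
          · right
            rw [Sym2.mem_iff] at hue
            rcases hue with rfl | rfl
            · rw [hpvuniq b hab]
            · rw [hpvuniq a hab.symm, Sym2.eq_swap]
        rcases key with key | key <;> rw [key] <;> simp
      · push_neg at hue
        exact Or.inl ⟨he, hue⟩
  have hFcard : m ≤ F.ncard := by
    have h1 : P.edgeSet.ncard ≤ (F ∪ {s(u, pu), s(v, pv)}).ncard :=
      Set.ncard_le_ncard hcover (Set.toFinite _)
    have h2 : (F ∪ {s(u, pu), s(v, pv)}).ncard ≤ F.ncard + 2 := by
      refine (Set.ncard_union_le _ _).trans ?_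
      have : ({s(u, pu), s(v, pv)} : Set (Sym2 V)).ncard ≤ 2 := by
        refine (Set.ncard_insert_le _ _).trans ?_
        simp
      omega
    omega
  obtain ⟨F', hF'sub, hF'card⟩ := Set.exists_subset_card_eq hFcard
  have hF'edge : F' ⊆ P.edgeSet := fun e he => (hF'sub he).1
  let N : G.Subgraph :=
    { verts := {x | ∃ e ∈ F', x ∈ e},
      Adj := fun a b => s(a, b) ∈ F',
      adj_sub := fun {a b} h => P.adj_sub (hF'edge h),
      edge_vert := fun {a b} h => ⟨s(a, b), h, Sym2.mem_mk_left a b⟩,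
      symm := ⟨fun a b h => by
        show s(b, a) ∈ F'
        rw [Sym2.eq_swap]
        exact h⟩ }
  have hedge : N.edgeSet = F' := by
    ext e
    induction e using Sym2.ind with
    | _ a b => exact Iff.rfl
  refine ⟨N, ?_, ?_, ?_, ?_⟩
  · rintro x ⟨e, heF', hxe⟩
    obtain ⟨y, rfl⟩ := Sym2.mem_iff_exists.mp hxe
    refine ⟨y, heF', ?_⟩
    intro y' hy'
    obtain ⟨w, hw, hwuniq⟩ := hP.1 (hP.2 x)
    have h1 : P.Adj x y := hF'edge heF'
    have h2 : P.Adj x y' := hF'edge hy'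
    rw [hwuniq y' h2, hwuniq y h1]
  · rw [hedge]
    exact hF'card
  · rintro ⟨y, hy⟩
    exact (hF'sub hy).2.1 (Sym2.mem_mk_left u y)
  · rintro ⟨y, hy⟩
    exact (hF'sub hy).2.2 (Sym2.mem_mk_left v y)

/-- `k`-extendability transfers along graph isomorphisms. -/
lemma IsKExtendable.of_iso {V W : Type*} [Fintype V] [Fintype W] {G : SimpleGraph V}
    {G' : SimpleGraph W} (f : G ≃g G') (k : ℕ) (h : G.IsKExtendable k) :
    G'.IsKExtendable k := by
  have hcomp : ∀ M : G'.Subgraph, (M.map f.symm.toHom).map f.toHom = M := by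
    intro M
    rw [← Subgraph.map_comp]
    have hid : f.toHom.comp f.symm.toHom = Hom.id := by
      ext x
      simp
    rw [hid, Subgraph.map_id]
  have hpm : ∀ P : G.Subgraph, P.IsPerfectMatching → (P.map f.toHom).IsPerfectMatching := by
    intro P hP
    refine ⟨hP.1.map _ f.injective, fun x => ?_⟩
    exact ⟨f.symm x, hP.2 _, by simp⟩
  constructor
  · obtain ⟨P, hP⟩ := h.1
    exact ⟨P.map f.toHom, hpm P hP⟩
  · intro M hM hMcard
    obtain ⟨P, hP, hle⟩ := h.2 (M.map f.symm.toHom) (hM.map _ f.symm.injective)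
      (by rw [edgeSet_map', Set.ncard_image_of_injective _
            (Sym2.map.injective (show Function.Injective ⇑f.symm.toHom from f.symm.injective))]
          exact hMcard)
    refine ⟨P.map f.toHom, hpm P hP, ?_⟩
    calc M = (M.map f.symm.toHom).map f.toHom := (hcomp M).symm
      _ ≤ P.map f.toHom := Subgraph.map_mono hle

/-- Restricting a perfect matching to a "closed" vertex set gives a perfect
matching of the induced graph. -/
lemma restrict_perfectMatching {V : Type*} {G : SimpleGraph V} {P : G.Subgraph}
    (hP : P.IsPerfectMatching) (s : Set V)
    (hclosed : ∀ x ∈ s, ∀ y, P.Adj x y → y ∈ s) :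
    ∃ Q : (G.induce s).Subgraph, Q.IsPerfectMatching ∧
      ∀ a b : s, P.Adj a b → Q.Adj a b := by
  refine ⟨{ verts := Set.univ,
            Adj := fun a b => P.Adj a b,
            adj_sub := fun {a b} h => P.adj_sub h,
            edge_vert := fun _ => Set.mem_univ _,
            symm := ⟨fun a b h => P.adj_symm h⟩ }, ⟨?_, fun x => Set.mem_univ x⟩, fun a b h => h⟩
  rintro x -
  obtain ⟨w, hw, huniq⟩ := hP.1 (hP.2 x)
  refine ⟨⟨w, hclosed x x.2 w hw⟩, hw, ?_⟩
  intro y hy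
  exact Subtype.ext (huniq y hy)

/-- Deleting the two endpoints of an edge from a `k`-extendable graph gives a
`(k-1)`-extendable graph. -/
lemma isKExtendable_delete_edge {V : Type*} [Fintype V] [DecidableEq V] (G : SimpleGraph V)
    (k : ℕ) (hk : 1 ≤ k) (hcard : 2 * k + 2 ≤ Fintype.card V)
    (hG : G.IsKExtendable k) (u v : V) (huv : G.Adj u v) :
    (G.induce ((({u, v} : Finset V)ᶜ : Finset V) : Set V)).IsKExtendable (k - 1) := by
  classical
  set s : Set V := ((({u, v} : Finset V)ᶜ : Finset V) : Set V) with hs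
  have hmem : ∀ x : V, x ∈ s ↔ x ≠ u ∧ x ≠ v := by
    intro x
    rw [hs]
    simp only [Finset.coe_compl, Set.mem_compl_iff, Finset.mem_coe, Finset.mem_insert,
      Finset.mem_singleton, not_or]
  -- support of the one-edge subgraph
  have hsOA : (G.subgraphOfAdj huv).support ⊆ {u, v} := by
    rintro x ⟨y, hy⟩
    have hy' : s(u, v) = s(x, y) := hy
    rw [Sym2.eq_iff] at hy'
    rcases hy' with ⟨rfl, rfl⟩ | ⟨rfl, rfl⟩
    · exact Set.mem_insert _ _
    · exact Set.mem_insert_of_mem _ rfl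
  -- the closedness of s under a perfect matching containing uv
  have hclosedP : ∀ P : G.Subgraph, P.IsPerfectMatching → P.Adj u v →
      ∀ x ∈ s, ∀ y, P.Adj x y → y ∈ s := by
    intro P hP hPuv x hxs y hxy
    rw [hmem] at hxs ⊢
    constructor
    · intro hyu
      obtain ⟨w, hw, hwuniq⟩ := hP.1 (hP.2 u)
      exact hxs.2 ((hwuniq x (P.adj_symm (hyu ▸ hxy))).trans (hwuniq v hPuv).symm)
    · intro hyv
      obtain ⟨w, hw, hwuniq⟩ := hP.1 (hP.2 v)
      exact hxs.1 ((hwuniq x (P.adj_symm (hyv ▸ hxy))).trans (hwuniq u (P.adj_symm hPuv)).symm)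
  -- core: extend any (k-1)-matching avoiding u,v to a perfect matching containing uv
  have core : ∀ N : G.Subgraph, N.IsMatching → N.edgeSet.ncard = k - 1 →
      u ∉ N.support → v ∉ N.support →
      ∃ P : G.Subgraph, P.IsPerfectMatching ∧ P.Adj u v ∧ N ≤ P := by
    intro N hN hNcard hNu hNv
    have hd : Disjoint N.support (G.subgraphOfAdj huv).support := by
      rw [Set.disjoint_left]
      intro x hx hx'
      rcases hsOA hx' with rfl | rfl
      · exact hNu hx
      · exact hNv hx
    have hMk := hN.sup (IsMatching.subgraphOfAdj huv) hd
    have hnotmem : s(u, v) ∉ N.edgeSet := by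
      intro hmem'
      exact hNu ⟨v, hmem'⟩
    have hcardMk : (N ⊔ G.subgraphOfAdj huv).edgeSet.ncard = k := by
      rw [Subgraph.edgeSet_sup, edgeSet_subgraphOfAdj,
        Set.ncard_union_eq (Set.disjoint_singleton_right.mpr hnotmem)
          (Set.toFinite _) (Set.toFinite _), Set.ncard_singleton, hNcard]
      omega
    obtain ⟨P, hP, hle⟩ := hG.2 _ hMk hcardMk
    refine ⟨P, hP, hle.2 (Or.inr rfl), le_trans le_sup_left hle⟩
  refine ⟨?_, ?_⟩
  · -- existence of a perfect matching
    obtain ⟨P0, hP0⟩ := hG.1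
    obtain ⟨N, hN, hNcard, hNu, hNv⟩ := exists_matching_avoiding hP0 u v (k - 1) (by omega)
    obtain ⟨P, hP, hPuv, -⟩ := core N hN hNcard hNu hNv
    obtain ⟨Q, hQ, -⟩ := restrict_perfectMatching hP s (hclosedP P hP hPuv)
    exact ⟨Q, hQ⟩
  · -- extension property
    intro M' hM' hM'card
    set Mg : G.Subgraph := M'.map (Embedding.induce s).toHom with hMg
    have hinj : Function.Injective ((Embedding.induce s (G := G)).toHom : s → V) :=
      Subtype.val_injective
    have hMgmatch : Mg.IsMatching := hM'.map _ hinj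
    have hMgcard : Mg.edgeSet.ncard = k - 1 := by
      rw [hMg, edgeSet_map', Set.ncard_image_of_injective _ (Sym2.map.injective hinj)]
      exact hM'card
    have hMgsupp : Mg.support ⊆ s := by
      rintro x ⟨y, hxy⟩
      obtain ⟨a, b, hab, rfl, rfl⟩ := hxy
      exact a.2
    have hMgu : u ∉ Mg.support := fun hx => ((hmem u).mp (hMgsupp hx)).1 rfl
    have hMgv : v ∉ Mg.support := fun hx => ((hmem v).mp (hMgsupp hx)).2 rfl
    obtain ⟨P, hP, hPuv, hMgP⟩ := core Mg hMgmatch hMgcard hMgu hMgv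
    obtain ⟨Q, hQ, hQadj⟩ := restrict_perfectMatching hP s (hclosedP P hP hPuv)
    refine ⟨Q, hQ, ⟨fun x _ => hQ.2 x, ?_⟩⟩
    intro a b hab
    exact hQadj a b (hMgP.2 ⟨a, b, hab, rfl, rfl⟩)

/-- Isomorphism of doubly-induced subgraphs with the same underlying vertex set. -/
def induceInduceIso {V : Type*} (G : SimpleGraph V) {A C : Set V} (B : Set A) (D : Set C)
    (h : ∀ x : V, (∃ hx : x ∈ A, (⟨x, hx⟩ : A) ∈ B) ↔ (∃ hx : x ∈ C, (⟨x, hx⟩ : C) ∈ D)) :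
    (G.induce A).induce B ≃g (G.induce C).induce D where
  toFun := fun p => ⟨⟨p.1.1, ((h p.1.1).mp ⟨p.1.2, p.2⟩).choose⟩,
    ((h p.1.1).mp ⟨p.1.2, p.2⟩).choose_spec⟩
  invFun := fun q => ⟨⟨q.1.1, ((h q.1.1).mpr ⟨q.1.2, q.2⟩).choose⟩,
    ((h q.1.1).mpr ⟨q.1.2, q.2⟩).choose_spec⟩
  left_inv := fun p => Subtype.ext (Subtype.ext rfl)
  right_inv := fun q => Subtype.ext (Subtype.ext rfl)
  map_rel_iff' := Iff.rfl

end SimpleGraph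

theorem nkGraph_delete_edge_vertices {V : Type*} [Fintype V] [DecidableEq V]
    (G : SimpleGraph V) (n k : ℕ) (hk : 1 ≤ k) (h : G.IsNKGraph n k)
    (u v : V) (huv : G.Adj u v) :
    (G.induce ((({u, v} : Finset V)ᶜ : Finset V) : Set V)).IsNKGraph n (k - 1) := by
  classical
  obtain ⟨hcard, hpar, hext⟩ := h
  have hne : u ≠ v := huv.ne
  have hcard2 : ({u, v} : Finset V).card = 2 := by
    rw [Finset.card_insert_of_notMem (by simp [hne]), Finset.card_singleton]
  have hWcard : Fintype.card ((({u, v} : Finset V)ᶜ : Finset V) : Set V) =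
      Fintype.card V - 2 := by
    rw [← Set.toFinset_card, Finset.toFinset_coe, Finset.card_compl, hcard2]
  refine ⟨?_, ?_, ?_⟩
  · rw [hWcard]; omega
  · rw [hWcard]; omega
  · intro S hS
    have hmemW : ∀ x : V, x ∈ ((({u, v} : Finset V)ᶜ : Finset V) : Set V) ↔
        ¬x = u ∧ ¬x = v := by
      intro x
      simp only [Finset.coe_compl, Set.mem_compl_iff, Finset.mem_coe, Finset.mem_insert,
        Finset.mem_singleton, not_or]
    set S' : Finset V := S.image Subtype.val with hS'def
    have hS'card : S'.card = n := by
      rw [hS'def, Finset.card_image_of_injective _ Subtype.val_injective, hS]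
    have hK := hext S' hS'card
    have hmemS' : ∀ x : V, x ∈ ((S'ᶜ : Finset V) : Set V) ↔ x ∉ S' := by
      intro x; simp
    have huS' : u ∉ S' := by
      rw [hS'def]
      simp only [Finset.mem_image]
      rintro ⟨a, -, ha⟩
      have h2 : (a : V) ∈ ((({u, v} : Finset V)ᶜ : Finset V) : Set V) := a.2
      rw [ha] at h2
      exact ((hmemW u).mp h2).1 rfl
    have hvS' : v ∉ S' := by
      rw [hS'def]
      simp only [Finset.mem_image]
      rintro ⟨a, -, ha⟩
      have h2 : (a : V) ∈ ((({u, v} : Finset V)ᶜ : Finset V) : Set V) := a.2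
      rw [ha] at h2
      exact ((hmemW v).mp h2).2 rfl
    set A : Set V := ((S'ᶜ : Finset V) : Set V) with hA
    let u' : A := ⟨u, (hmemS' u).mpr huS'⟩
    let v' : A := ⟨v, (hmemS' v).mpr hvS'⟩
    have hadj' : (G.induce A).Adj u' v' := huv
    have hcardA : 2 * k + 2 ≤ Fintype.card A := by
      have hAc : Fintype.card A = Fintype.card V - n := by
        have h3 : Fintype.card ((S'ᶜ : Finset V) : Set V) = Fintype.card V - n := by
          rw [← Set.toFinset_card, Finset.toFinset_coe, Finset.card_compl, hS'card]
        exact h3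
      omega
    have hB := (G.induce A).isKExtendable_delete_edge k hk hcardA hK u' v' hadj'
    refine SimpleGraph.IsKExtendable.of_iso (SimpleGraph.induceInduceIso G _ _ ?_) (k - 1) hB
    intro x
    constructor
    · rintro ⟨hxA, hxB⟩
      have hx' : x ≠ u ∧ x ≠ v := by
        have h2 := hxB
        simp only [Finset.coe_compl, Set.mem_compl_iff, Finset.mem_coe, Finset.mem_insert,
          Finset.mem_singleton, not_or] at h2
        exact ⟨fun hh => h2.1 (Subtype.ext hh), fun hh => h2.2 (Subtype.ext hh)⟩
      refine ⟨(hmemW x).mpr hx', ?_⟩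
      simp only [Finset.coe_compl, Set.mem_compl_iff, Finset.mem_coe]
      intro hxS
      have hxmem : x ∈ S' := by
        rw [hS'def]
        exact Finset.mem_image.mpr ⟨_, hxS, rfl⟩
      exact (hmemS' x).mp hxA hxmem
    · rintro ⟨hxW, hxD⟩
      have hxS : (⟨x, hxW⟩ : ((({u, v} : Finset V)ᶜ : Finset V) : Set V)) ∉ S := by
        simpa using hxD
      have hxS' : x ∉ S' := by
        rw [hS'def]
        simp only [Finset.mem_image]
        rintro ⟨a, haS, ha⟩
        exact hxS (by rwa [show a = ⟨x, hxW⟩ from Subtype.ext ha] at haS)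
      refine ⟨(hmemS' x).mpr hxS', ?_⟩
      simp only [Finset.coe_compl, Set.mem_compl_iff, Finset.mem_coe, Finset.mem_insert,
        Finset.mem_singleton, not_or]
      have hx' := (hmemW x).mp hxW
      exact ⟨fun hh => hx'.1 (congrArg Subtype.val hh), fun hh => hx'.2 (congrArg Subtype.val hh)⟩
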